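/- arXiv:1707.07193 — 3 statements merged into one kernel-verified Lean document; each statement's English description precedes it below -/
import Mathlib

section
/- The expected number of random elements needed to generate the symmetric group on 3 points is e(Sym(3)) = 29/10. -/
/-- The probability that `k` uniformly random elements of `G` generate `G`. -/
noncomputable def genProb (G : Type*) [Group G] (k : ℕ) : ℝ :=
  (Nat.card {v : Fin k → G // Subgroup.closure (Set.range v) = ⊤} : ℝ) /
    (Nat.card G : ℝ) ^ k

/-- `egen G = ∑_{k ≥ 0} (1 - P_G(k))`, the expected number of random elements needed to
generate `G`. -/
noncomputable def egen (G : Type*) [Group G] : ℝ :=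
  ∑' k : ℕ, (1 - genProb G k)

section EgenS3

open Equiv Subgroup


abbrev G3 := Equiv.Perm (Fin 3)

/-- A subgroup of `S₃` containing an element of order 2 and one of order 3 is everything. -/
lemma ltop (K : Subgroup G3) (a c : G3) (ha : a ∈ K) (hc : c ∈ K)
    (ha2 : a ^ 2 = 1) (ha1 : a ≠ 1) (hc3 : c ^ 3 = 1) (hc1 : c ≠ 1) : K = ⊤ := by
  apply Subgroup.eq_top_of_card_eq
  have hoa : orderOf (⟨a, ha⟩ : K) = 2 := by
    have := orderOf_injective K.subtype K.subtype_injective ⟨a, ha⟩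
    simp only [Subgroup.coe_subtype] at this
    rw [← this]; exact orderOf_eq_prime ha2 ha1
  have hoc : orderOf (⟨c, hc⟩ : K) = 3 := by
    have := orderOf_injective K.subtype K.subtype_injective ⟨c, hc⟩
    simp only [Subgroup.coe_subtype] at this
    rw [← this]; exact orderOf_eq_prime hc3 hc1
  have h2 : 2 ∣ Nat.card K := by have := orderOf_dvd_natCard (⟨a, ha⟩ : K); rwa [hoa] at this
  have h3 : 3 ∣ Nat.card K := by have := orderOf_dvd_natCard (⟨c, hc⟩ : K); rwa [hoc] at this
  have h6 : 6 ∣ Nat.card K := Nat.Coprime.mul_dvd_of_dvd_of_dvd (by norm_num) h2 h3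
  have hdvd : Nat.card K ∣ 6 := by
    have := Subgroup.card_subgroup_dvd_card K
    simpa [Nat.card_eq_fintype_card, Fintype.card_perm, Fintype.card_fin,
      show Nat.factorial 3 = 6 from rfl] using this
  have : Nat.card K = 6 := Nat.dvd_antisymm hdvd h6
  rw [this, Nat.card_eq_fintype_card]; decide

/-- An odd element together with any element other than it and `1` generates `S₃`. -/
lemma gen_top {K : Subgroup G3} {a b : G3} (haK : a ∈ K) (hbK : b ∈ K)
    (hsa : Perm.sign a = -1) (hb1 : b ≠ 1) (hba : b ≠ a) : K = ⊤ := by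
  obtain ⟨ha2, ha1⟩ : a ^ 2 = 1 ∧ a ≠ 1 :=
    (by decide : ∀ x : G3, Perm.sign x = -1 → x ^ 2 = 1 ∧ x ≠ 1) a hsa
  rcases Int.units_eq_one_or (Perm.sign b) with hsb | hsb
  · obtain ⟨hb3, hb1'⟩ : b ^ 3 = 1 ∧ b ≠ 1 :=
      (by decide : ∀ x : G3, Perm.sign x = 1 → x ≠ 1 → x ^ 3 = 1 ∧ x ≠ 1) b hsb hb1
    exact ltop K a b haK hbK ha2 ha1 hb3 hb1'
  · obtain ⟨h3, h1⟩ : (a * b) ^ 3 = 1 ∧ a * b ≠ 1 :=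
      (by decide : ∀ x y : G3, Perm.sign x = -1 → Perm.sign y = -1 → y ≠ x →
        (x * y) ^ 3 = 1 ∧ x * y ≠ 1) a b hsa hsb hba
    exact ltop K a (a * b) haK (K.mul_mem haK hbK) ha2 ha1 h3 h1

lemma mem_zpowers_iff_of_sq {a x : G3} (ha : a ^ 2 = 1) :
    x ∈ zpowers a ↔ x = 1 ∨ x = a := by
  constructor
  · intro hx
    obtain ⟨n, hn⟩ := Subgroup.mem_zpowers_iff.mp hx
    subst hn
    rcases Int.even_or_odd n with ⟨m, rfl⟩ | ⟨m, rfl⟩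
    · left; rw [← two_mul, zpow_mul]; norm_cast; rw [ha, one_zpow]
    · right; rw [zpow_add, zpow_mul]; norm_cast; rw [ha, one_zpow, one_mul, pow_one]
  · rintro (rfl | rfl)
    · exact one_mem _
    · exact mem_zpowers _

lemma not_top_of_in_pair {k : ℕ} (v : Fin k → G3) (t w : G3) (ht : t ^ 2 = 1)
    (hw1 : w ≠ 1) (hwt : w ≠ t) (hc : ∀ i, v i = 1 ∨ v i = t) :
    Subgroup.closure (Set.range v) ≠ ⊤ := by
  intro h
  have hle : Subgroup.closure (Set.range v) ≤ zpowers t := by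
    rw [Subgroup.closure_le]
    rintro x ⟨i, rfl⟩
    rcases hc i with h1 | h1 <;> rw [h1]
    · exact one_mem _
    · exact mem_zpowers t
  rw [h] at hle
  have := hle (Subgroup.mem_top w)
  rw [mem_zpowers_iff_of_sq ht] at this
  tauto

/-- Characterization of generating families of `S₃`. -/
lemma main_iff {k : ℕ} (v : Fin k → G3) :
    Subgroup.closure (Set.range v) = ⊤ ↔
    ¬ ((∀ i, Perm.sign (v i) = 1) ∨ (∀ i, v i = 1 ∨ v i = Equiv.swap 0 1) ∨
       (∀ i, v i = 1 ∨ v i = Equiv.swap 0 2) ∨ (∀ i, v i = 1 ∨ v i = Equiv.swap 1 2)) := by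
  constructor
  · intro h hD
    rcases hD with hc | hc | hc | hc
    · have hle : Subgroup.closure (Set.range v) ≤ Perm.sign.ker := by
        rw [Subgroup.closure_le]
        rintro x ⟨i, rfl⟩
        exact hc i
      rw [h] at hle
      have := hle (Subgroup.mem_top (Equiv.swap 0 1))
      rw [MonoidHom.mem_ker] at this
      exact absurd this (by decide)
    · exact not_top_of_in_pair v _ (Equiv.swap 0 2) (by decide) (by decide) (by decide) hc h
    · exact not_top_of_in_pair v _ (Equiv.swap 0 1) (by decide) (by decide) (by decide) hc h
    · exact not_top_of_in_pair v _ (Equiv.swap 0 1) (by decide) (by decide) (by decide) hc h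
  · intro hD
    push_neg at hD
    obtain ⟨⟨i0, h0⟩, ⟨i1, h11, h12⟩, ⟨i2, h21, h22⟩, ⟨i3, h31, h32⟩⟩ := hD
    have hsa : Perm.sign (v i0) = -1 := by
      rcases Int.units_eq_one_or (Perm.sign (v i0)) with h | h
      · exact absurd h h0
      · exact h
    have hmem : ∀ i, v i ∈ Subgroup.closure (Set.range v) :=
      fun i => Subgroup.subset_closure ⟨i, rfl⟩
    rcases (by decide : ∀ x : G3, Perm.sign x = -1 →
        x = Equiv.swap 0 1 ∨ x = Equiv.swap 0 2 ∨ x = Equiv.swap 1 2) _ hsa with h | h | h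
    · exact gen_top (hmem i0) (hmem i1) hsa h11 (h ▸ h12)
    · exact gen_top (hmem i0) (hmem i2) hsa h21 (h ▸ h22)
    · exact gen_top (hmem i0) (hmem i3) hsa h31 (h ▸ h32)

lemma card_pi_pred (k : ℕ) (P : G3 → Prop) [DecidablePred P] :
    (Finset.univ.filter (fun v : Fin k → G3 => ∀ i, P (v i))).card
      = (Finset.univ.filter P).card ^ k := by
  rw [← Fintype.card_subtype]
  rw [Fintype.card_congr (Equiv.subtypePiEquivPi (p := fun _ b => P b))]
  rw [Fintype.card_fun, Fintype.card_subtype, Fintype.card_fin]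

lemma card_fun6 (k : ℕ) : Fintype.card (Fin k → G3) = 6 ^ k := by
  rw [Fintype.card_fun, Fintype.card_fin]
  norm_num [Fintype.card_perm, Fintype.card_fin, show Nat.factorial 3 = 6 from rfl]

lemma card_Dtrue (k : ℕ) :
    Fintype.card {v : Fin k → G3 //
      (∀ i, Perm.sign (v i) = 1) ∨ (∀ i, v i = 1 ∨ v i = Equiv.swap 0 1) ∨
      (∀ i, v i = 1 ∨ v i = Equiv.swap 0 2) ∨ (∀ i, v i = 1 ∨ v i = Equiv.swap 1 2)}
      = 3 ^ k + 3 * (2 ^ k - 1) := by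
  rw [Fintype.card_subtype]
  simp only [Finset.filter_or]
  set F0 := Finset.univ.filter (fun v : Fin k → G3 => ∀ i, Perm.sign (v i) = 1) with hF0
  set F1 := Finset.univ.filter (fun v : Fin k → G3 => ∀ i, v i = 1 ∨ v i = Equiv.swap 0 1) with hF1
  set F2 := Finset.univ.filter (fun v : Fin k → G3 => ∀ i, v i = 1 ∨ v i = Equiv.swap 0 2) with hF2
  set F3 := Finset.univ.filter (fun v : Fin k → G3 => ∀ i, v i = 1 ∨ v i = Equiv.swap 1 2) with hF3
  set o : Fin k → G3 := fun _ => 1 with ho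
  have hoF0 : o ∈ F0 := by simp [hF0, ho]
  have hoF1 : o ∈ F1 := by simp [hF1, ho]
  have hoF2 : o ∈ F2 := by simp [hF2, ho]
  have hoF3 : o ∈ F3 := by simp [hF3, ho]
  have hc0 : F0.card = 3 ^ k := by
    rw [hF0, card_pi_pred (P := fun a : G3 => Perm.sign a = 1)]
    norm_num [show (Finset.univ.filter (fun a : G3 => Perm.sign a = 1)).card = 3 from by decide]
  have hc1 : F1.card = 2 ^ k := by
    rw [hF1, card_pi_pred (P := fun a : G3 => a = 1 ∨ a = Equiv.swap 0 1)]
    norm_num [show (Finset.univ.filter (fun a : G3 => a = 1 ∨ a = Equiv.swap 0 1)).card = 2 from by decide]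
  have hc2 : F2.card = 2 ^ k := by
    rw [hF2, card_pi_pred (P := fun a : G3 => a = 1 ∨ a = Equiv.swap 0 2)]
    norm_num [show (Finset.univ.filter (fun a : G3 => a = 1 ∨ a = Equiv.swap 0 2)).card = 2 from by decide]
  have hc3 : F3.card = 2 ^ k := by
    rw [hF3, card_pi_pred (P := fun a : G3 => a = 1 ∨ a = Equiv.swap 1 2)]
    norm_num [show (Finset.univ.filter (fun a : G3 => a = 1 ∨ a = Equiv.swap 1 2)).card = 2 from by decide]
  -- any element in two of the sets is `o`
  have hint01 : ∀ v, v ∈ F0 → v ∈ F1 → v = o := by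
    intro v h1 h2
    simp only [hF0, hF1, Finset.mem_filter, Finset.mem_univ, true_and] at h1 h2
    funext i
    exact (by decide : ∀ x : G3, Perm.sign x = 1 → (x = 1 ∨ x = Equiv.swap 0 1) → x = 1)
      _ (h1 i) (h2 i)
  have hint02 : ∀ v, v ∈ F0 → v ∈ F2 → v = o := by
    intro v h1 h2
    simp only [hF0, hF2, Finset.mem_filter, Finset.mem_univ, true_and] at h1 h2
    funext i
    exact (by decide : ∀ x : G3, Perm.sign x = 1 → (x = 1 ∨ x = Equiv.swap 0 2) → x = 1)
      _ (h1 i) (h2 i)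
  have hint03 : ∀ v, v ∈ F0 → v ∈ F3 → v = o := by
    intro v h1 h2
    simp only [hF0, hF3, Finset.mem_filter, Finset.mem_univ, true_and] at h1 h2
    funext i
    exact (by decide : ∀ x : G3, Perm.sign x = 1 → (x = 1 ∨ x = Equiv.swap 1 2) → x = 1)
      _ (h1 i) (h2 i)
  have hint12 : ∀ v, v ∈ F1 → v ∈ F2 → v = o := by
    intro v h1 h2
    simp only [hF1, hF2, Finset.mem_filter, Finset.mem_univ, true_and] at h1 h2
    funext i
    exact (by decide : ∀ x : G3, (x = 1 ∨ x = Equiv.swap 0 1) → (x = 1 ∨ x = Equiv.swap 0 2) → x = 1)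
      _ (h1 i) (h2 i)
  have hint13 : ∀ v, v ∈ F1 → v ∈ F3 → v = o := by
    intro v h1 h2
    simp only [hF1, hF3, Finset.mem_filter, Finset.mem_univ, true_and] at h1 h2
    funext i
    exact (by decide : ∀ x : G3, (x = 1 ∨ x = Equiv.swap 0 1) → (x = 1 ∨ x = Equiv.swap 1 2) → x = 1)
      _ (h1 i) (h2 i)
  have hint23 : ∀ v, v ∈ F2 → v ∈ F3 → v = o := by
    intro v h1 h2
    simp only [hF2, hF3, Finset.mem_filter, Finset.mem_univ, true_and] at h1 h2
    funext i
    exact (by decide : ∀ x : G3, (x = 1 ∨ x = Equiv.swap 0 2) → (x = 1 ∨ x = Equiv.swap 1 2) → x = 1)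
      _ (h1 i) (h2 i)
  have hU : F0 ∪ (F1 ∪ (F2 ∪ F3)) = F0 ∪ (F1.erase o ∪ (F2.erase o ∪ F3.erase o)) := by
    ext v
    by_cases hv : v = o
    · subst hv; simp [hoF0]
    · simp [Finset.mem_erase, hv]
  have hd3 : Disjoint (F2.erase o) (F3.erase o) := by
    rw [Finset.disjoint_left]
    intro v hv1 hv2
    rw [Finset.mem_erase] at hv1 hv2
    exact hv1.1 (hint23 v hv1.2 hv2.2)
  have hd2 : Disjoint (F1.erase o) (F2.erase o ∪ F3.erase o) := by
    rw [Finset.disjoint_left]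
    intro v hv1 hv2
    rw [Finset.mem_erase] at hv1
    rcases Finset.mem_union.mp hv2 with hv2 | hv2 <;> rw [Finset.mem_erase] at hv2
    · exact hv1.1 (hint12 v hv1.2 hv2.2)
    · exact hv1.1 (hint13 v hv1.2 hv2.2)
  have hd1 : Disjoint F0 (F1.erase o ∪ (F2.erase o ∪ F3.erase o)) := by
    rw [Finset.disjoint_left]
    intro v hv1 hv2
    rcases Finset.mem_union.mp hv2 with hv2 | hv2
    · rw [Finset.mem_erase] at hv2
      exact hv2.1 (hint01 v hv1 hv2.2)
    · rcases Finset.mem_union.mp hv2 with hv2 | hv2 <;> rw [Finset.mem_erase] at hv2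
      · exact hv2.1 (hint02 v hv1 hv2.2)
      · exact hv2.1 (hint03 v hv1 hv2.2)
  rw [hU, Finset.card_union_of_disjoint hd1, Finset.card_union_of_disjoint hd2,
    Finset.card_union_of_disjoint hd3, Finset.card_erase_of_mem hoF1,
    Finset.card_erase_of_mem hoF2, Finset.card_erase_of_mem hoF3, hc0, hc1, hc2, hc3]
  have h1 : 1 ≤ 2 ^ k := Nat.one_le_two_pow
  omega

lemma card_gen (k : ℕ) :
    Nat.card {v : Fin k → G3 // Subgroup.closure (Set.range v) = ⊤}
      = 6 ^ k - (3 ^ k + 3 * (2 ^ k - 1)) := by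
  rw [Nat.card_congr (Equiv.subtypeEquivRight (fun v => main_iff v))]
  rw [Nat.card_eq_fintype_card, Fintype.card_subtype_compl, card_Dtrue, card_fun6]

lemma bound (k : ℕ) : 3 ^ k + 3 * (2 ^ k - 1) ≤ 6 ^ k := by
  have h := Fintype.card_subtype_le (fun v : Fin k → G3 =>
      (∀ i, Perm.sign (v i) = 1) ∨ (∀ i, v i = 1 ∨ v i = Equiv.swap 0 1) ∨
      (∀ i, v i = 1 ∨ v i = Equiv.swap 0 2) ∨ (∀ i, v i = 1 ∨ v i = Equiv.swap 1 2))
  rwa [card_Dtrue, card_fun6] at h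


lemma one_sub_genProb (k : ℕ) :
    1 - genProb G3 k = (1/2 : ℝ) ^ k + 3 * (1/3 : ℝ) ^ k - 3 * (1/6 : ℝ) ^ k := by
  have hc6 : (Nat.card G3 : ℝ) = 6 := by
    rw [Nat.card_eq_fintype_card]
    norm_num [Fintype.card_perm, Fintype.card_fin, show Nat.factorial 3 = 6 from rfl]
  have h1 : (1:ℕ) ≤ 2 ^ k := Nat.one_le_two_pow
  have hb := bound k
  have h6 : ((6:ℝ)) ^ k ≠ 0 := by positivity
  rw [genProb, card_gen, hc6]
  rw [Nat.cast_sub hb]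
  push_cast [Nat.cast_sub h1]
  have e1 : ((1:ℝ)/2) ^ k = 3 ^ k / 6 ^ k := by
    rw [← div_pow]; norm_num
  have e2 : ((1:ℝ)/3) ^ k = 2 ^ k / 6 ^ k := by
    rw [← div_pow]; norm_num
  have e3 : ((1:ℝ)/6) ^ k = 1 / 6 ^ k := by
    rw [div_pow, one_pow]
  rw [e1, e2, e3]
  field_simp
  ring


end EgenS3

/-- `e(Sym(3)) = 29/10`. -/
theorem egen_symmGroup_three : egen (Equiv.Perm (Fin 3)) = 29 / 10 := by
  have s1 : Summable (fun k : ℕ => (1/2 : ℝ) ^ k) :=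
    summable_geometric_of_lt_one (by norm_num) (by norm_num)
  have s2 : Summable (fun k : ℕ => 3 * (1/3 : ℝ) ^ k) :=
    (summable_geometric_of_lt_one (by norm_num) (by norm_num)).mul_left 3
  have s3 : Summable (fun k : ℕ => 3 * (1/6 : ℝ) ^ k) :=
    (summable_geometric_of_lt_one (by norm_num) (by norm_num)).mul_left 3
  rw [egen]
  have : (fun k : ℕ => 1 - genProb (Equiv.Perm (Fin 3)) k)
      = fun k : ℕ => (1/2 : ℝ) ^ k + 3 * (1/3 : ℝ) ^ k - 3 * (1/6 : ℝ) ^ k := by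
    funext k; exact one_sub_genProb k
  rw [this]
  rw [Summable.tsum_sub (s1.add s2) s3, Summable.tsum_add s1 s2, tsum_mul_left, tsum_mul_left,
    tsum_geometric_of_lt_one (by norm_num) (by norm_num),
    tsum_geometric_of_lt_one (by norm_num) (by norm_num),
    tsum_geometric_of_lt_one (by norm_num) (by norm_num)]
  norm_num
end

section
/- Let G be a nontrivial finite group and let t be a positive integer. Then e(G) ≤ t + ∑_{k=t}^∞ ∑_{n=2}^∞ m_n(G)/n^k, where m_n(G) denotes the number of maximal subgroups of G of index n. -/
open Subgroup Finset

private lemma coatom_index_ge {G : Type*} [Group G] [Finite G] {M : Subgroup G}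
    (hM : IsCoatom M) : 2 ≤ M.index := by
  have h0 : M.index ≠ 0 := Subgroup.index_ne_zero_of_finite
  have h1 : M.index ≠ 1 := fun h => hM.1 (Subgroup.index_eq_one.mp h)
  omega

private lemma coatom_index_le {G : Type*} [Group G] [Finite G] (M : Subgroup G) :
    M.index ≤ Nat.card G := by
  have h := Subgroup.index_mul_card M
  have hc : 0 < Nat.card ↥M := Nat.card_pos
  calc M.index ≤ M.index * Nat.card ↥M := Nat.le_mul_of_pos_right _ hc
    _ = Nat.card G := h

noncomputable def Ssum (G : Type*) [Group G] (k : ℕ) : ℝ :=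
  ∑' M : {M : Subgroup G // IsCoatom M}, ((M.1.index : ℝ))⁻¹ ^ k

lemma bad_le_sigma (G : Type*) [Group G] [Finite G] (k : ℕ) :
    Nat.card {v : Fin k → G // Subgroup.closure (Set.range v) ≠ ⊤} ≤
      Nat.card (Σ M : {M : Subgroup G // IsCoatom M}, (Fin k → ↥M.1)) := by
  classical
  have hex : ∀ v : {v : Fin k → G // Subgroup.closure (Set.range v) ≠ ⊤},
      ∃ M : Subgroup G, IsCoatom M ∧ Subgroup.closure (Set.range v.1) ≤ M := by
    intro v
    rcases (eq_top_or_exists_le_coatom _).resolve_left v.2 with ⟨M, hM, hle⟩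
    exact ⟨M, hM, hle⟩
  choose M hM hle using hex
  apply Nat.card_le_card_of_injective
    (fun v => ⟨⟨M v, hM v⟩, fun i => ⟨v.1 i, hle v (Subgroup.subset_closure (Set.mem_range_self i))⟩⟩)
  intro v w h
  have := congrArg (fun p : (Σ M : {M : Subgroup G // IsCoatom M}, (Fin k → ↥M.1)) =>
    fun i => ((p.2 i : G))) h
  exact Subtype.ext (funext fun i => congrFun this i)

lemma genProb_nonneg (G : Type*) [Group G] [Finite G] (k : ℕ) : 0 ≤ genProb G k := by
  unfold genProb; positivity

lemma good_le (G : Type*) [Group G] [Finite G] (k : ℕ) :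
    Nat.card {v : Fin k → G // Subgroup.closure (Set.range v) = ⊤} ≤ Nat.card G ^ k := by
  classical
  letI : Fintype G := Fintype.ofFinite G
  have h : Nat.card {v : Fin k → G // Subgroup.closure (Set.range v) = ⊤}
      ≤ Nat.card (Fin k → G) := Nat.card_le_card_of_injective _ Subtype.val_injective
  simpa [Nat.card_eq_fintype_card, Fintype.card_fun] using h

lemma genProb_le_one (G : Type*) [Group G] [Finite G] (k : ℕ) : genProb G k ≤ 1 := by
  have hN : (0:ℝ) < (Nat.card G : ℝ) ^ k := by
    have : 0 < Nat.card G := Nat.card_pos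
    positivity
  rw [genProb, div_le_one hN]
  calc (Nat.card {v : Fin k → G // Subgroup.closure (Set.range v) = ⊤} : ℝ)
      ≤ ((Nat.card G ^ k : ℕ) : ℝ) := by exact_mod_cast good_le G k
    _ = (Nat.card G : ℝ) ^ k := by push_cast; ring

lemma one_sub_genProb_le (G : Type*) [Group G] [Finite G] (k : ℕ) :
    1 - genProb G k ≤ Ssum G k := by
  classical
  letI : Fintype G := Fintype.ofFinite G
  letI : Fintype {M : Subgroup G // IsCoatom M} := Fintype.ofFinite _
  set N := Nat.card G with hNdef
  have hN0 : 0 < N := Nat.card_pos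
  have hNk : (0:ℝ) < (N:ℝ) ^ k := by positivity
  set good := Nat.card {v : Fin k → G // Subgroup.closure (Set.range v) = ⊤} with hgood
  set bad := Nat.card {v : Fin k → G // Subgroup.closure (Set.range v) ≠ ⊤} with hbad
  have hsum : good + bad = N ^ k := by
    rw [hgood, hbad]
    simp only [Nat.card_eq_fintype_card]
    rw [Fintype.card_subtype_compl]
    have hle : Fintype.card {v : Fin k → G // Subgroup.closure (Set.range v) = ⊤}
        ≤ Fintype.card (Fin k → G) := Fintype.card_subtype_le _
    have hfun : Fintype.card (Fin k → G) = N ^ k := by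
      simp [Fintype.card_fun, hNdef, Nat.card_eq_fintype_card]
    omega
  have hstep1 : 1 - genProb G k = (bad : ℝ) / (N:ℝ) ^ k := by
    have hc : (good : ℝ) + (bad : ℝ) = (N:ℝ)^k := by exact_mod_cast congrArg (Nat.cast (R := ℝ)) hsum
    have hb : (bad : ℝ) = (N:ℝ)^k - (good:ℝ) := by linarith
    rw [genProb, ← hNdef, ← hgood, hb, sub_div, div_self (ne_of_gt hNk)]
  rw [hstep1]
  -- bound bad
  have hsig : Nat.card (Σ M : {M : Subgroup G // IsCoatom M}, (Fin k → ↥M.1))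
      = ∑ M : {M : Subgroup G // IsCoatom M}, Nat.card ↥M.1 ^ k := by
    simp [Nat.card_eq_fintype_card, Fintype.card_sigma, Fintype.card_fun]
  have hbadle : (bad : ℝ) ≤ ∑ M : {M : Subgroup G // IsCoatom M}, ((Nat.card ↥M.1 : ℝ)) ^ k := by
    have := bad_le_sigma G k
    rw [hsig] at this
    calc (bad : ℝ) ≤ ((∑ M : {M : Subgroup G // IsCoatom M}, Nat.card ↥M.1 ^ k : ℕ) : ℝ) := by
          exact_mod_cast this
      _ = _ := by push_cast; ring_nf
  rw [Ssum, tsum_fintype]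
  rw [div_le_iff₀ hNk]
  calc (bad : ℝ) ≤ ∑ M : {M : Subgroup G // IsCoatom M}, ((Nat.card ↥M.1 : ℝ)) ^ k := hbadle
    _ = (∑ M : {M : Subgroup G // IsCoatom M}, ((M.1.index : ℝ))⁻¹ ^ k) * (N:ℝ)^k := by
        rw [Finset.sum_mul]
        apply Finset.sum_congr rfl
        intro M _
        have hidx : (M.1.index : ℝ) ≠ 0 := by
          have := coatom_index_ge M.2; positivity
        have hMN : (M.1.index : ℝ) * (Nat.card ↥M.1 : ℝ) = (N:ℝ) := by
          exact_mod_cast congrArg (Nat.cast (R := ℝ)) (Subgroup.index_mul_card M.1)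
        have hcard : (Nat.card ↥M.1 : ℝ) = (N:ℝ) / (M.1.index : ℝ) := by
          rw [eq_div_iff hidx]; linear_combination hMN
        rw [hcard, div_pow, inv_pow, div_eq_mul_inv, mul_comm]

lemma tsum_m_eq (G : Type*) [Group G] [Finite G] [Nontrivial G] (K : ℕ) :
    ∑' j : ℕ, (Nat.card {M : Subgroup G // IsCoatom M ∧ M.index = j + 2} : ℝ) / ((j:ℝ)+2)^K
      = Ssum G K := by
  classical
  letI : Fintype (Subgroup G) := Fintype.ofFinite _
  letI : Fintype {M : Subgroup G // IsCoatom M} := Fintype.ofFinite _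
  set N := Nat.card G with hNdef
  have hN2 : 2 ≤ N := Finite.one_lt_card
  have hzero : ∀ j ∉ Finset.range N,
      (Nat.card {M : Subgroup G // IsCoatom M ∧ M.index = j + 2} : ℝ) / ((j:ℝ)+2)^K = 0 := by
    intro j hj
    rw [Finset.mem_range, not_lt] at hj
    have : IsEmpty {M : Subgroup G // IsCoatom M ∧ M.index = j + 2} := by
      rw [isEmpty_subtype]
      rintro M ⟨hM, hidx⟩
      have h1 := coatom_index_le M
      omega
    simp [Nat.card_of_isEmpty]
  rw [tsum_eq_sum hzero, Ssum, tsum_fintype]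
  rw [← Finset.sum_fiberwise_of_maps_to (g := fun M : {M : Subgroup G // IsCoatom M} =>
      M.1.index - 2) (t := Finset.range N)
      (fun M _ => by
        have h1 := coatom_index_ge M.2
        have h2 := coatom_index_le M.1
        show M.1.index - 2 ∈ Finset.range N
        rw [Finset.mem_range]; omega)
      (fun M => ((M.1.index : ℝ))⁻¹ ^ K)]
  apply Finset.sum_congr rfl
  intro j hj
  symm
  have hidx : ∀ M ∈ Finset.univ.filter
      (fun M : {M : Subgroup G // IsCoatom M} => M.1.index - 2 = j), M.1.index = j + 2 := by
    intro M hM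
    rw [Finset.mem_filter] at hM
    have := coatom_index_ge M.2
    omega
  have hcard : (Finset.univ.filter
      (fun M : {M : Subgroup G // IsCoatom M} => M.1.index - 2 = j)).card
      = Nat.card {M : Subgroup G // IsCoatom M ∧ M.index = j + 2} := by
    rw [Nat.card_eq_fintype_card, ← Fintype.card_subtype]
    apply Fintype.card_congr
    refine ⟨fun x => ⟨x.1.1, x.1.2, ?_⟩, fun y => ⟨⟨y.1, y.2.1⟩, ?_⟩, fun x => rfl, fun y => rfl⟩
    · have := coatom_index_ge x.1.2
      have := x.2
      omega
    · show y.1.index - 2 = j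
      have := y.2.2
      omega
  calc ∑ M ∈ Finset.univ.filter
        (fun M : {M : Subgroup G // IsCoatom M} => M.1.index - 2 = j), ((M.1.index : ℝ))⁻¹ ^ K
      = ∑ _M ∈ Finset.univ.filter
        (fun M : {M : Subgroup G // IsCoatom M} => M.1.index - 2 = j), (((j:ℝ)+2))⁻¹ ^ K := by
        apply Finset.sum_congr rfl
        intro M hM
        rw [hidx M hM]
        push_cast
        ring_nf
    _ = (Nat.card {M : Subgroup G // IsCoatom M ∧ M.index = j + 2} : ℝ) / ((j:ℝ)+2)^K := by
        rw [Finset.sum_const, hcard, nsmul_eq_mul, inv_pow, div_eq_mul_inv]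

lemma Ssum_nonneg (G : Type*) [Group G] [Finite G] (k : ℕ) : 0 ≤ Ssum G k := by
  apply tsum_nonneg
  intro M
  positivity

lemma summable_Ssum (G : Type*) [Group G] [Finite G] : Summable (fun k => Ssum G k) := by
  classical
  letI : Fintype {M : Subgroup G // IsCoatom M} := Fintype.ofFinite _
  have hb : ∀ k : ℕ, Ssum G k ≤
      ((Fintype.card {M : Subgroup G // IsCoatom M} : ℕ) : ℝ) * (2⁻¹ : ℝ) ^ k := by
    intro k
    rw [Ssum, tsum_fintype]
    calc ∑ M : {M : Subgroup G // IsCoatom M}, ((M.1.index : ℝ))⁻¹ ^ k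
        ≤ (Finset.univ : Finset {M : Subgroup G // IsCoatom M}).card • ((2⁻¹:ℝ) ^ k) := by
          apply Finset.sum_le_card_nsmul
          intro M _
          apply pow_le_pow_left₀ (by positivity)
          have h2 := coatom_index_ge M.2
          rw [inv_le_inv₀ (by exact_mod_cast Nat.lt_of_lt_of_le Nat.zero_lt_two h2) (by norm_num)]
          exact_mod_cast h2
      _ = _ := by rw [nsmul_eq_mul, Finset.card_univ]
  exact Summable.of_nonneg_of_le (fun k => Ssum_nonneg G k) hb
    ((summable_geometric_of_lt_one (by norm_num) (by norm_num)).mul_left _)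

set_option maxHeartbeats 1000000 in
/-- For a nontrivial finite group `G` and a positive integer `t`,
`e(G) ≤ t + ∑_{k ≥ t} ∑_{n ≥ 2} m_n(G)/n^k`, where `m_n(G)` is the number of
maximal subgroups of `G` of index `n`. -/
theorem egen_le_sum_maximal_subgroups (G : Type*) [Group G] [Finite G] [Nontrivial G]
    (t : ℕ) (ht : 0 < t) :
    egen G ≤ t + ∑' k : ℕ, ∑' j : ℕ,
      (Nat.card {M : Subgroup G // IsCoatom M ∧ M.index = j + 2} : ℝ) /
        ((j : ℝ) + 2) ^ (k + t) := by
  classical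
  have hS : Summable (fun k => Ssum G k) := summable_Ssum G
  have hle : ∀ k, 1 - genProb G k ≤ Ssum G k := one_sub_genProb_le G
  have hf : Summable (fun k => 1 - genProb G k) := by
    apply Summable.of_nonneg_of_le _ hle hS
    intro k
    linarith [genProb_le_one G k]
  have hsplit := Summable.sum_add_tsum_nat_add (f := fun k => 1 - genProb G k) t hf
  have h1 : ∑ i ∈ Finset.range t, (1 - genProb G i) ≤ t := by
    calc ∑ i ∈ Finset.range t, (1 - genProb G i)
        ≤ ∑ _i ∈ Finset.range t, (1:ℝ) :=
          Finset.sum_le_sum (fun i _ => by linarith [genProb_nonneg G i])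
      _ = t := by simp
  have h2 : ∑' k : ℕ, (1 - genProb G (k + t)) ≤ ∑' k : ℕ, Ssum G (k + t) :=
    Summable.tsum_le_tsum (fun k => hle _) ((summable_nat_add_iff t).2 hf) ((summable_nat_add_iff t).2 hS)
  have h3 : ∑' k : ℕ, ∑' j : ℕ,
      (Nat.card {M : Subgroup G // IsCoatom M ∧ M.index = j + 2} : ℝ) /
        ((j : ℝ) + 2) ^ (k + t) = ∑' k : ℕ, Ssum G (k + t) :=
    tsum_congr fun k => tsum_m_eq G (k + t)
  rw [egen, ← hsplit, h3]
  linarith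
end

section
/- The expected number of random elements needed to generate the direct product of a cyclic group of order 2 with the dihedral group of order 8 is e((ℤ/2ℤ) × D₈) = 94/21. -/
/-! Auxiliary setup: `GG = C₂ × D₈`, `VV = C₂³`, and the Frattini-quotient map `φ`. -/

private abbrev GG := Multiplicative (ZMod 2) × DihedralGroup 4
private abbrev VV := Multiplicative (ZMod 2) × Multiplicative (ZMod 2) × Multiplicative (ZMod 2)

private def f0 : GG → VV := fun g =>
  (g.1, match g.2 with
    | DihedralGroup.r i => (Multiplicative.ofAdd (i.val : ZMod 2), Multiplicative.ofAdd 0)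
    | DihedralGroup.sr i => (Multiplicative.ofAdd (i.val : ZMod 2), Multiplicative.ofAdd 1))

private def φ : GG →* VV := MonoidHom.mk' f0 (by decide)

private lemma φ_surj : Function.Surjective φ := by decide

private def zz : GG := (1, DihedralGroup.r 2)
private def ww : GG := (1, DihedralGroup.r 1)

private def NN : Subgroup GG where
  carrier := {1, zz}
  one_mem' := by left; rfl
  mul_mem' := by
    intro a b ha hb
    simp only [Set.mem_insert_iff, Set.mem_singleton_iff] at *
    rcases ha with rfl | rfl <;> rcases hb with rfl | rfl
    · simp
    · simp
    · simp
    · left; decide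
  inv_mem' := by
    intro a ha
    simp only [Set.mem_insert_iff, Set.mem_singleton_iff] at *
    rcases ha with rfl | rfl
    · left; simp
    · right; decide

private instance : NN.Normal := by
  constructor
  intro n hn g
  simp only [NN, Subgroup.mem_mk, Set.mem_insert_iff, Set.mem_singleton_iff] at *
  rcases hn with rfl | rfl
  · simp
  · right
    have : g * zz = zz * g := by revert g; decide
    rw [this, mul_assoc, mul_inv_cancel, mul_one]
    exact Set.mem_singleton _

private lemma ker_le_NN : φ.ker ≤ NN := by
  intro x hx
  have h := (by decide : ∀ g : GG, φ g = 1 → g = 1 ∨ g = zz) x (MonoidHom.mem_ker.mp hx)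
  rcases h with rfl | rfl
  · exact NN.one_mem
  · right; rfl

/-- A set generates `G = C₂ × D₈` iff its image in the Frattini quotient `C₂³` generates. -/
private lemma key_iff (S : Set GG) :
    Subgroup.closure S = ⊤ ↔ Subgroup.closure (φ '' S) = ⊤ := by
  constructor
  · intro h
    rw [← MonoidHom.map_closure, h, ← MonoidHom.range_eq_map, MonoidHom.range_eq_top]
    exact φ_surj
  · intro h
    set H := Subgroup.closure S with hH
    have hmap : Subgroup.map φ H = ⊤ := by
      rw [hH, MonoidHom.map_closure, h]
    have hsup : H ⊔ φ.ker = ⊤ := by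
      rw [← Subgroup.comap_map_eq, hmap, Subgroup.comap_top]
    have hsupN : H ⊔ NN = ⊤ := by
      apply top_le_iff.mp
      rw [← hsup]
      exact sup_le_sup_left ker_le_NN H
    have hw : ww ∈ (↑(H ⊔ NN) : Set GG) := by rw [hsupN]; trivial
    rw [Subgroup.mul_normal] at hw
    obtain ⟨h1, hh1, n, hn, hmul⟩ := hw
    have hz : zz ∈ H := by
      have hn' : n = 1 ∨ n = zz := hn
      have hsq : ww * ww = zz := by decide
      simp only at hmul
      rcases hn' with rfl | rfl
      · rw [mul_one] at hmul
        rw [← hsq, ← hmul]; exact H.mul_mem hh1 hh1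
      · have key : ∀ a : GG, (a * zz) * (a * zz) = a * a := by decide
        rw [← hsq, ← hmul, key h1]
        exact H.mul_mem hh1 hh1
    apply top_le_iff.mp
    rw [← hsupN]
    apply sup_le le_rfl
    intro x hx
    rcases (hx : x = 1 ∨ x = zz) with rfl | rfl
    · exact H.one_mem
    · exact hz

/-! Counting in `VV = C₂³`. -/

private lemma VV_sq : ∀ v : VV, v * v = 1 := by decide
private lemma VV_inv : ∀ v : VV, v⁻¹ = v := by decide

private lemma sup_carrier (H : Subgroup VV) (x : VV) (hx : x ∉ H) :
    (↑(Subgroup.closure {x} ⊔ H) : Set VV) = ↑H ∪ (x * ·) '' ↑H := by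
  apply subset_antisymm
  · let K : Subgroup VV :=
      { carrier := ↑H ∪ (x * ·) '' ↑H
        one_mem' := Or.inl H.one_mem
        mul_mem' := by
          rintro a b (ha | ⟨a', ha', rfl⟩) (hb | ⟨b', hb', rfl⟩)
          · exact Or.inl (H.mul_mem ha hb)
          · exact Or.inr ⟨a * b', H.mul_mem ha hb', by simp [mul_left_comm]⟩
          · exact Or.inr ⟨a' * b, H.mul_mem ha' hb, by simp [mul_assoc]⟩
          · refine Or.inl ?_
            have : (x * a') * (x * b') = a' * b' := by
              rw [show (x * a') * (x * b') = (x * x) * (a' * b') by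
                simp [mul_assoc, mul_left_comm], VV_sq, one_mul]
            rw [this]; exact H.mul_mem ha' hb'
        inv_mem' := by
          rintro a (ha | ⟨a', ha', rfl⟩)
          · rw [VV_inv]; exact Or.inl ha
          · rw [VV_inv]; exact Or.inr ⟨a', ha', rfl⟩ }
    have : Subgroup.closure {x} ⊔ H ≤ K := by
      apply sup_le
      · rw [Subgroup.closure_le]
        intro y hy
        rcases hy with rfl
        exact Or.inr ⟨1, H.one_mem, by simp⟩
      · intro y hy; exact Or.inl hy
    exact this
  · rintro y (hy | ⟨y', hy', rfl⟩)
    · exact Subgroup.mem_sup_right hy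
    · exact Subgroup.mul_mem _
        (Subgroup.mem_sup_left (Subgroup.subset_closure rfl))
        (Subgroup.mem_sup_right hy')

open scoped Classical in
private lemma step (H : Subgroup VV) (x : VV) :
    Nat.card ↥(Subgroup.closure {x} ⊔ H) =
      if x ∈ H then Nat.card H else 2 * Nat.card H := by
  split_ifs with hx
  · have : Subgroup.closure {x} ⊔ H = H := by
      rw [sup_eq_right, Subgroup.closure_le]
      intro y hy; rcases hy with rfl; exact hx
    rw [this]
  · have hcarr := sup_carrier H x hx
    have h1 : Nat.card ↥(Subgroup.closure {x} ⊔ H) =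
        (↑H ∪ (x * ·) '' ↑H : Set VV).ncard := by
      rw [← Nat.card_coe_set_eq, ← hcarr, SetLike.coe_sort_coe]
    rw [h1, Set.ncard_union_eq]
    · rw [Set.ncard_image_of_injective _ (mul_right_injective x),
        ← Nat.card_coe_set_eq, SetLike.coe_sort_coe, two_mul]
    · rw [Set.disjoint_left]
      rintro a ha ⟨a', ha', rfl⟩
      apply hx
      have : x = (x * a') * a'⁻¹ := by simp
      rw [this]
      exact H.mul_mem ha (H.inv_mem ha')

private lemma VV_card : Nat.card VV = 8 := by
  simp [Nat.card_eq_fintype_card]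

private lemma cardH (H : Subgroup VV) :
    Nat.card H = 1 ∨ Nat.card H = 2 ∨ Nat.card H = 4 ∨ Nat.card H = 8 := by
  have h := Subgroup.card_subgroup_dvd_card H
  rw [VV_card] at h
  have h8 : Nat.card H ≤ 8 := Nat.le_of_dvd (by norm_num) h
  interval_cases h' : (Nat.card H) <;> omega

open scoped Classical

private noncomputable def Acard (c k : ℕ) : ℕ :=
  Nat.card {u : Fin k → VV // Nat.card (Subgroup.closure (Set.range u)) = c}

private lemma count_x (H : Subgroup VV) (c : ℕ) :
    Nat.card {x : VV // Nat.card ↥(Subgroup.closure {x} ⊔ H) = c} =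
      (if Nat.card H = c then Nat.card H else 0) +
        (if 2 * Nat.card H = c then 8 - Nat.card H else 0) := by
  have hstep : ∀ x : VV, Nat.card ↥(Subgroup.closure {x} ⊔ H) =
      if x ∈ H then Nat.card H else 2 * Nat.card H := fun x => step H x
  have hpos : 0 < Nat.card H := Nat.card_pos
  by_cases hc1 : Nat.card H = c <;> by_cases hc2 : 2 * Nat.card H = c
  · omega
  · have key : ∀ x : VV, (Nat.card ↥(Subgroup.closure {x} ⊔ H) = c) ↔ x ∈ H := by
      intro x; rw [hstep x]
      by_cases hx : x ∈ H
      · rw [if_pos hx]; exact iff_of_true hc1 hx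
      · rw [if_neg hx]; exact iff_of_false hc2 hx
    rw [Nat.card_congr (Equiv.subtypeEquivRight key)]
    show Nat.card ↥H = _
    rw [if_pos hc1, if_neg hc2, add_zero]
  · have key : ∀ x : VV, (Nat.card ↥(Subgroup.closure {x} ⊔ H) = c) ↔ ¬ (x ∈ H) := by
      intro x; rw [hstep x]
      by_cases hx : x ∈ H
      · rw [if_pos hx]; exact iff_of_false hc1 (by simp [hx])
      · rw [if_neg hx]; exact iff_of_true hc2 hx
    rw [Nat.card_congr (Equiv.subtypeEquivRight key)]
    rw [if_neg hc1, if_pos hc2, zero_add]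
    rw [Nat.card_eq_fintype_card, Fintype.card_subtype_compl]
    have h8 : Fintype.card VV = 8 := by simp
    have hH : Fintype.card {x : VV // x ∈ H} = Nat.card H := by
      rw [Nat.card_eq_fintype_card]
    rw [h8, hH]
  · have key : ∀ x : VV, ¬ (Nat.card ↥(Subgroup.closure {x} ⊔ H) = c) := by
      intro x; rw [hstep x]
      by_cases hx : x ∈ H
      · rw [if_pos hx]; exact hc1
      · rw [if_neg hx]; exact hc2
    rw [if_neg hc1, if_neg hc2, add_zero]
    rw [Nat.card_eq_zero]
    left
    rw [isEmpty_subtype]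
    exact key

private lemma sum_classify (k : ℕ) (g : ℕ → ℕ) :
    ∑ u : Fin k → VV, g (Nat.card (Subgroup.closure (Set.range u))) =
      Acard 1 k * g 1 + Acard 2 k * g 2 + Acard 4 k * g 4 + Acard 8 k * g 8 := by
  have hsplit : ∀ u : Fin k → VV, g (Nat.card (Subgroup.closure (Set.range u))) =
      (if Nat.card (Subgroup.closure (Set.range u)) = 1 then g 1 else 0) +
      (if Nat.card (Subgroup.closure (Set.range u)) = 2 then g 2 else 0) +
      (if Nat.card (Subgroup.closure (Set.range u)) = 4 then g 4 else 0) +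
      (if Nat.card (Subgroup.closure (Set.range u)) = 8 then g 8 else 0) := by
    intro u
    rcases cardH (Subgroup.closure (Set.range u)) with h | h | h | h <;> rw [h] <;> norm_num
  rw [Finset.sum_congr rfl (fun u _ => hsplit u)]
  rw [Finset.sum_add_distrib, Finset.sum_add_distrib, Finset.sum_add_distrib]
  have hterm : ∀ c : ℕ,
      (∑ u : Fin k → VV, if Nat.card (Subgroup.closure (Set.range u)) = c then g c else 0) =
        Acard c k * g c := by
    intro c
    rw [← Finset.sum_filter, Finset.sum_const, smul_eq_mul]
    congr 1
    rw [Acard, Nat.card_eq_fintype_card, Fintype.card_subtype]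
  rw [hterm 1, hterm 2, hterm 4, hterm 8]

private lemma Acard_succ (c k : ℕ) :
    Acard c (k + 1) =
      Acard 1 k * ((if 1 = c then 1 else 0) + (if 2 * 1 = c then 8 - 1 else 0)) +
      Acard 2 k * ((if 2 = c then 2 else 0) + (if 2 * 2 = c then 8 - 2 else 0)) +
      Acard 4 k * ((if 4 = c then 4 else 0) + (if 2 * 4 = c then 8 - 4 else 0)) +
      Acard 8 k * ((if 8 = c then 8 else 0) + (if 2 * 8 = c then 8 - 8 else 0)) := by
  have hp : ∀ u : Fin (k + 1) → VV,
      Subgroup.closure (Set.range u) =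
        Subgroup.closure {u 0} ⊔ Subgroup.closure (Set.range (Fin.tail u)) := by
    intro u
    rw [Fin.range_fin_succ, Set.insert_eq, Subgroup.closure_union]
  have e1 : {p : VV × (Fin k → VV) //
      Nat.card ↥(Subgroup.closure {p.1} ⊔ Subgroup.closure (Set.range p.2)) = c} ≃
      {u : Fin (k+1) → VV // Nat.card (Subgroup.closure (Set.range u)) = c} := by
    refine Equiv.subtypeEquiv (Fin.consEquiv (fun _ => VV)) ?_
    rintro ⟨x, w⟩
    show _ ↔ Nat.card (Subgroup.closure (Set.range (Fin.cons x w))) = c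
    rw [hp (Fin.cons x w)]
    simp [Fin.tail_cons, Fin.cons_zero]
  have e2 : {p : VV × (Fin k → VV) //
      Nat.card ↥(Subgroup.closure {p.1} ⊔ Subgroup.closure (Set.range p.2)) = c} ≃
      Σ w : Fin k → VV,
        {x : VV // Nat.card ↥(Subgroup.closure {x} ⊔ Subgroup.closure (Set.range w)) = c} :=
    { toFun := fun p => ⟨p.1.2, p.1.1, p.2⟩
      invFun := fun q => ⟨(q.2.1, q.1), q.2.2⟩
      left_inv := fun ⟨⟨x, w⟩, h⟩ => rfl
      right_inv := fun ⟨w, x, h⟩ => rfl }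
  have e := e1.symm.trans e2
  rw [Acard, Nat.card_congr e, Nat.card_eq_fintype_card, Fintype.card_sigma]
  have hterm : ∀ w : Fin k → VV,
      Fintype.card
        {x : VV // Nat.card ↥(Subgroup.closure {x} ⊔ Subgroup.closure (Set.range w)) = c} =
      (if Nat.card (Subgroup.closure (Set.range w)) = c
        then Nat.card (Subgroup.closure (Set.range w)) else 0) +
      (if 2 * Nat.card (Subgroup.closure (Set.range w)) = c
        then 8 - Nat.card (Subgroup.closure (Set.range w)) else 0) := by
    intro w
    rw [← Nat.card_eq_fintype_card]
    exact count_x _ c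
  rw [Finset.sum_congr rfl (fun w _ => hterm w)]
  exact sum_classify k (fun n => (if n = c then n else 0) + (if 2 * n = c then 8 - n else 0))

private lemma Acard_zero :
    Acard 1 0 = 1 ∧ Acard 2 0 = 0 ∧ Acard 4 0 = 0 ∧ Acard 8 0 = 0 := by
  have hbot : ∀ u : Fin 0 → VV,
      Nat.card (Subgroup.closure (Set.range u)) = 1 := by
    intro u
    rw [Set.range_eq_empty, Subgroup.closure_empty]
    exact Subgroup.card_bot
  refine ⟨?_, ?_, ?_, ?_⟩
  · rw [Acard, Nat.card_congr (Equiv.subtypeUnivEquiv hbot)]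
    simp [Nat.card_eq_fintype_card]
  all_goals
    rw [Acard, Nat.card_eq_zero]
    left
    rw [isEmpty_subtype]
    intro u
    rw [hbot u]
    omega

private lemma Acard_closed (k : ℕ) :
    Acard 1 k = 1 ∧ Acard 2 k + 7 = 7 * 2 ^ k ∧
      Acard 4 k + 21 * 2 ^ k = 7 * 4 ^ k + 14 ∧
      Acard 8 k + 7 * 4 ^ k + 8 = 8 ^ k + 14 * 2 ^ k := by
  induction k with
  | zero =>
    obtain ⟨h1, h2, h4, h8⟩ := Acard_zero
    refine ⟨h1, ?_, ?_, ?_⟩ <;> simp [h2, h4, h8]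
  | succ k ih =>
    obtain ⟨h1, h2, h4, h8⟩ := ih
    have r1 := Acard_succ 1 k
    have r2 := Acard_succ 2 k
    have r4 := Acard_succ 4 k
    have r8 := Acard_succ 8 k
    norm_num at r1 r2 r4 r8
    have p2 : (2:ℕ) ^ (k+1) = 2 * 2 ^ k := by ring
    have p4 : (4:ℕ) ^ (k+1) = 4 * 4 ^ k := by ring
    have p8 : (8:ℕ) ^ (k+1) = 8 * 8 ^ k := by ring
    refine ⟨?_, ?_, ?_, ?_⟩ <;> omega

/-! Transfer the count from `VV` back to `GG`. -/

private def sec : VV → GG := fun v =>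
  (v.1, if v.2.2 = Multiplicative.ofAdd 1
    then DihedralGroup.sr ((Multiplicative.toAdd v.2.1).val : ZMod 4)
    else DihedralGroup.r ((Multiplicative.toAdd v.2.1).val : ZMod 4))

private def eGG : GG ≃ VV × ZMod 2 where
  toFun g := (φ g, if g = sec (φ g) then 0 else 1)
  invFun p := if p.2 = 0 then sec p.1 else sec p.1 * zz
  left_inv := by decide
  right_inv := by decide

private lemma VVspan_card (k : ℕ) :
    Nat.card {u : Fin k → VV // Subgroup.closure (Set.range u) = ⊤} = Acard 8 k := by
  rw [Acard]
  apply Nat.card_congr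
  apply Equiv.subtypeEquivRight
  intro u
  constructor
  · intro h; rw [h, Subgroup.card_top, VV_card]
  · intro h
    exact Subgroup.eq_top_of_card_eq _ (by rw [h, VV_card])

private lemma GGspan_card (k : ℕ) :
    Nat.card {v : Fin k → GG // Subgroup.closure (Set.range v) = ⊤} =
      Acard 8 k * 2 ^ k := by
  have E1 : {v : Fin k → GG // Subgroup.closure (Set.range v) = ⊤} ≃
      {w : Fin k → VV × ZMod 2 // Subgroup.closure (Set.range (fun i => (w i).1)) = ⊤} := by
    refine Equiv.subtypeEquiv (Equiv.piCongrRight (fun _ => eGG)) ?_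
    intro v
    rw [key_iff, ← Set.range_comp]
    rfl
  have E2 : {w : Fin k → VV × ZMod 2 //
        Subgroup.closure (Set.range (fun i => (w i).1)) = ⊤} ≃
      {p : (Fin k → VV) × (Fin k → ZMod 2) // Subgroup.closure (Set.range p.1) = ⊤} := by
    refine Equiv.subtypeEquiv (Equiv.arrowProdEquivProdArrow (Fin k) (fun _ => VV) (fun _ => ZMod 2)) ?_
    intro w
    rfl
  have E3 : {p : (Fin k → VV) × (Fin k → ZMod 2) //
        Subgroup.closure (Set.range p.1) = ⊤} ≃
      {u : Fin k → VV // Subgroup.closure (Set.range u) = ⊤} × (Fin k → ZMod 2) :=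
    { toFun := fun p => (⟨p.1.1, p.2⟩, p.1.2)
      invFun := fun q => ⟨(q.1.1, q.2), q.1.2⟩
      left_inv := fun ⟨⟨u, t⟩, h⟩ => rfl
      right_inv := fun ⟨⟨u, h⟩, t⟩ => rfl }
  rw [Nat.card_congr ((E1.trans E2).trans E3), Nat.card_prod, VVspan_card]
  congr 1
  rw [Nat.card_eq_fintype_card]
  simp

/-! The closed-form probability and the series. -/

private lemma GG_card : Nat.card GG = 16 := by
  rw [Nat.card_eq_fintype_card]
  rfl

private lemma genProb_eq (k : ℕ) :
    1 - genProb GG k = 7 * (2⁻¹ : ℝ) ^ k - 14 * (4⁻¹ : ℝ) ^ k + 8 * (8⁻¹ : ℝ) ^ k := by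
  have hA := (Acard_closed k).2.2.2
  have hAr : (Acard 8 k : ℝ) = 8 ^ k + 14 * 2 ^ k - 7 * 4 ^ k - 8 := by
    have := congrArg (fun n : ℕ => (n : ℝ)) hA
    push_cast at this
    linarith
  have hcount : (Nat.card {v : Fin k → GG // Subgroup.closure (Set.range v) = ⊤} : ℝ) =
      (8 ^ k + 14 * 2 ^ k - 7 * 4 ^ k - 8) * 2 ^ k := by
    rw [GGspan_card]
    push_cast
    rw [hAr]
  rw [genProb, hcount, GG_card]
  have hc16 : ((16:ℕ) : ℝ) = 16 := by norm_num
  rw [hc16]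
  have a0 : (2:ℝ) ^ k ≠ 0 := by positivity
  have h4 : (4:ℝ) ^ k = ((2:ℝ) ^ k) ^ 2 := by
    rw [← pow_mul, mul_comm, pow_mul]; norm_num
  have h8 : (8:ℝ) ^ k = ((2:ℝ) ^ k) ^ 3 := by
    rw [← pow_mul, mul_comm, pow_mul]; norm_num
  have h16 : (16:ℝ) ^ k = ((2:ℝ) ^ k) ^ 4 := by
    rw [← pow_mul, mul_comm, pow_mul]; norm_num
  have hi2 : (2⁻¹ : ℝ) ^ k = ((2:ℝ) ^ k)⁻¹ := by rw [inv_pow]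
  have hi4 : (4⁻¹ : ℝ) ^ k = (((2:ℝ) ^ k) ^ 2)⁻¹ := by rw [inv_pow, h4]
  have hi8 : (8⁻¹ : ℝ) ^ k = (((2:ℝ) ^ k) ^ 3)⁻¹ := by rw [inv_pow, h8]
  rw [h4, h8, h16, hi2, hi4, hi8]
  field_simp
  ring

theorem egen_c2_times_dihedral_eight' :
    egen GG = 94 / 21 := by
  rw [egen, tsum_congr genProb_eq]
  have s2 : Summable (fun k : ℕ => (2⁻¹ : ℝ) ^ k) :=
    summable_geometric_of_lt_one (by norm_num) (by norm_num)
  have s4 : Summable (fun k : ℕ => (4⁻¹ : ℝ) ^ k) :=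
    summable_geometric_of_lt_one (by norm_num) (by norm_num)
  have s8 : Summable (fun k : ℕ => (8⁻¹ : ℝ) ^ k) :=
    summable_geometric_of_lt_one (by norm_num) (by norm_num)
  rw [Summable.tsum_add ((s2.mul_left 7).sub (s4.mul_left 14)) (s8.mul_left 8),
    Summable.tsum_sub (s2.mul_left 7) (s4.mul_left 14), tsum_mul_left, tsum_mul_left, tsum_mul_left,
    tsum_geometric_of_lt_one (by norm_num) (by norm_num),
    tsum_geometric_of_lt_one (by norm_num) (by norm_num),
    tsum_geometric_of_lt_one (by norm_num) (by norm_num)]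
  norm_num

/-- `e((ℤ/2ℤ) × D₈) = 94/21`. -/
theorem egen_c2_times_dihedral_eight :
    egen (Multiplicative (ZMod 2) × DihedralGroup 4) = 94 / 21 := by
  exact egen_c2_times_dihedral_eight'
end
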